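/- Let G be a finite group, p a prime, x ∈ G of order p, and suppose |N_G(⟨x⟩)| < p². Then every Sylow p-subgroup of G is cyclic of order p. -/

import Mathlib

lemma centralizer_le_normalizer_zpowers {G : Type*} [Group G] (x : G) :
    Subgroup.centralizer {x} ≤ Subgroup.normalizer (Subgroup.zpowers x : Set G) := by
  intro g hg
  have hc : Commute x g := Subgroup.mem_centralizer_iff.mp hg x rfl
  rw [Subgroup.mem_normalizer_iff]
  intro h
  constructor
  · rintro ⟨k, rfl⟩
    refine ⟨k, ?_⟩
    show x ^ k = g * x ^ k * g⁻¹
    rw [← (hc.zpow_left k).eq, mul_inv_cancel_right]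
  · rintro ⟨k, hk⟩
    have hk' : x ^ k = g * h * g⁻¹ := hk
    refine ⟨k, ?_⟩
    show x ^ k = h
    have h2 : h = g⁻¹ * x ^ k * g := by rw [hk']; group
    have h3 : g⁻¹ * x ^ k * g = x ^ k := by
      rw [mul_assoc, (hc.zpow_left k).eq, ← mul_assoc, inv_mul_cancel, one_mul]
    rw [h2, h3]

/-- Let `G` be a finite group, `p` a prime, `x ∈ G` of order `p`, with
`|N_G(⟨x⟩)| < p²`. Then every Sylow `p`-subgroup of `G` is cyclic of order `p`. -/
theorem sylow_cyclic_of_small_normalizer (G : Type*) [Group G] [Fintype G] (p : ℕ)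
    [Fact p.Prime] (x : G) (hx : orderOf x = p)
    (hN : Nat.card (Subgroup.normalizer (Subgroup.zpowers x : Set G)) < p ^ 2) :
    ∀ P : Sylow p G, IsCyclic P ∧ Nat.card P = p := by
  have hp := Fact.out (p := p.Prime)
  have hzp : IsPGroup p (Subgroup.zpowers x) :=
    IsPGroup.of_card (by rw [Nat.card_zpowers, hx, pow_one])
  obtain ⟨Q, hQ⟩ := hzp.exists_le_sylow
  set n := (Nat.card G).factorization p with hn
  have hQcard : Nat.card Q = p ^ n := Q.card_eq_multiplicity
  have hn1 : 1 ≤ n := by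
    have hdvd : p ∣ Nat.card G := hx ▸ orderOf_dvd_natCard x
    exact Nat.Prime.factorization_pos_of_dvd hp Nat.card_pos.ne' hdvd
  have hn2 : n < 2 := by
    by_contra hge
    push_neg at hge
    have hQ2 : p ^ 2 ≤ Nat.card Q := by
      rw [hQcard]; exact Nat.pow_le_pow_right hp.pos hge
    have hxQ : x ∈ Q := hQ (Subgroup.mem_zpowers x)
    set x' : Q := ⟨x, hxQ⟩ with hx'
    have hox' : orderOf x' = p := by rw [Subgroup.orderOf_mk, hx]
    set C : Subgroup Q := Subgroup.centralizer {x'} with hCdef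
    have hx'C : x' ∈ C := by
      rw [hCdef, Subgroup.mem_centralizer_iff]
      rintro h rfl
      rfl
    have hzle : Subgroup.zpowers x' ≤ C := Subgroup.zpowers_le.mpr hx'C
    have hCpg : IsPGroup p C := Q.2.to_subgroup C
    obtain ⟨k, hk⟩ := (IsPGroup.iff_card).mp hCpg
    have hpdvd : p ∣ Nat.card C := by
      have := Subgroup.card_dvd_of_le hzle
      rwa [Nat.card_zpowers, hox'] at this
    have hCne : Nat.card C ≠ p := by
      intro hCp
      have hCeq : Subgroup.zpowers x' = C :=
        Subgroup.eq_of_le_of_card_ge hzle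
          (by rw [Nat.card_zpowers, hox']; exact hCp.le)
      have hcent : Subgroup.center Q ≤ Subgroup.zpowers x' :=
        hCeq ▸ Subgroup.center_le_centralizer {x'}
      have hQnt : Nontrivial Q := by
        have h1 : 1 < Nat.card Q :=
          lt_of_lt_of_le (Nat.one_lt_pow (by norm_num) hp.one_lt) hQ2
        exact Finite.one_lt_card_iff_nontrivial.mp h1
      have hcnt : Nontrivial (Subgroup.center Q) := Q.2.center_nontrivial
      have hcard_center : Nat.card (Subgroup.center Q) = p := by
        have hdvd := Subgroup.card_dvd_of_le hcent
        rw [Nat.card_zpowers, hox'] at hdvd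
        rcases hp.eq_one_or_self_of_dvd _ hdvd with h1 | h1
        · exact absurd h1 (Finite.one_lt_card_iff_nontrivial.mpr hcnt).ne'
        · exact h1
      have hceq : Subgroup.center Q = Subgroup.zpowers x' :=
        Subgroup.eq_of_le_of_card_ge hcent
          (by rw [Nat.card_zpowers, hox']; exact hcard_center.ge)
      have hx'center : x' ∈ Subgroup.center Q := hceq ▸ Subgroup.mem_zpowers x'
      have hCtop : C = ⊤ :=
        Subgroup.centralizer_eq_top_iff_subset.mpr (by simpa using hx'center)
      rw [hCtop, Subgroup.card_top] at hCp
      have h2 : p ^ 2 ≤ p := hQ2.trans_eq hCp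
      have := hp.one_lt
      nlinarith
    have hC2 : p ^ 2 ≤ Nat.card C := by
      rw [hk] at hpdvd hCne ⊢
      have hk1 : k ≠ 0 := by
        rintro rfl
        rw [pow_zero] at hpdvd
        exact hp.ne_one (Nat.dvd_one.mp hpdvd)
      have hk2 : 2 ≤ k := by
        rcases Nat.lt_or_ge k 2 with h | h
        · interval_cases k
          · exact absurd rfl hk1
          · rw [pow_one] at hCne; exact absurd rfl hCne
        · exact h
      exact Nat.pow_le_pow_right hp.pos hk2
    have hmaple : C.map (Q : Subgroup G).subtype ≤ Subgroup.normalizer (Subgroup.zpowers x : Set G) := by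
      rintro g ⟨c, hc, rfl⟩
      apply centralizer_le_normalizer_zpowers
      rw [Subgroup.mem_centralizer_iff]
      rintro h rfl
      have hcm := Subgroup.mem_centralizer_iff.mp hc x' rfl
      have hcm' : ((x' * c : Q) : G) = ((c * x' : Q) : G) := congrArg Subtype.val hcm
      simpa using hcm'
    have hcardmap : Nat.card (C.map (Q : Subgroup G).subtype) = Nat.card C :=
      (Nat.card_congr (Subgroup.equivMapOfInjective C (Q : Subgroup G).subtype
        (Subgroup.subtype_injective _)).toEquiv).symm
    have hle := Subgroup.card_le_of_le hmaple
    omega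
  have hne : n = 1 := by omega
  intro P
  have hPcard : Nat.card P = p := by
    rw [P.card_eq_multiplicity, ← hn, hne, pow_one]
  exact ⟨isCyclic_of_prime_card hPcard, hPcard⟩
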